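/- For any prime p > 3, the rational number ∑_{k=1}^{p-1} H_k·L_k/k is congruent to 0 modulo p, where L_k denotes the k-th Lucas number. -/

import Mathlib

/-- The Lucas numbers. -/
def lucasNum : ℕ → ℤ
  | 0 => 2
  | 1 => 1
  | n + 2 => lucasNum (n + 1) + lucasNum n

/-- `x ≡ y (mod p^m)` for rational numbers: `x - y = p^m * r` with `p ∤ den r`. -/
def ratCong (p m : ℕ) (x y : ℚ) : Prop :=
  ∃ r : ℚ, x - y = (p : ℚ) ^ m * r ∧ ¬ (p ∣ r.den)

open Finset

lemma harm_Icc (n : ℕ) : harmonic n = ∑ k ∈ Icc 1 n, ((k:ℚ))⁻¹ := by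
  induction n with
  | zero => simp [harmonic]
  | succ n ih =>
    rw [harmonic_succ, ih, Finset.sum_Icc_succ_top (by omega)]

lemma harm_int (k : ℕ) : ∃ h : ℤ, (harmonic k : ℚ) * k.factorial = h := by
  induction k with
  | zero => exact ⟨0, by simp⟩
  | succ n ih =>
    obtain ⟨h, hh⟩ := ih
    refine ⟨h * (n+1) + n.factorial, ?_⟩
    have h1 : ((n:ℚ)+1) ≠ 0 := by positivity
    rw [harmonic_succ, Nat.factorial_succ]
    push_cast
    rw [add_mul]
    have h2 : ((n:ℚ)+1)⁻¹ * (((n:ℚ)+1) * (n.factorial:ℚ)) = (n.factorial:ℚ) := by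
      rw [← mul_assoc, inv_mul_cancel₀ h1, one_mul]
    rw [h2]
    linear_combination ((n:ℚ)+1) * hh

lemma harm_succ_fact (n : ℕ) : (harmonic (n+1):ℚ) * ((n:ℚ)+1) * (n.factorial:ℚ)
    = harmonic n * n.factorial * ((n:ℚ)+1) + n.factorial := by
  have h1 : ((n:ℚ)+1) ≠ 0 := by positivity
  rw [harmonic_succ]
  push_cast
  field_simp

lemma ck_cong (n : ℕ) : ∀ k : ℕ, k ≤ n → ∃ m : ℤ,
    ((-1:ℚ)^k * (n.choose k) - 1 + ((n:ℚ)+1) * harmonic k) * k.factorial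
      = ((n:ℚ)+1)^2 * m := by
  intro k
  induction k with
  | zero => intro _; exact ⟨0, by simp⟩
  | succ j ih =>
    intro hj
    obtain ⟨m', E1⟩ := ih (by omega)
    obtain ⟨h, E2⟩ := harm_int j
    refine ⟨(j+1) * m' - (n+1) * m' + h, ?_⟩
    have hc : ((n.choose (j+1) : ℚ)) * ((j:ℚ)+1) = (n.choose j : ℚ) * ((n:ℚ) - j) := by
      have := Nat.choose_succ_right_eq n j
      have hsub : ((n - j : ℕ) : ℚ) = (n:ℚ) - j := by
        have : j ≤ n := by omega
        push_cast [this]; ring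
      calc ((n.choose (j+1) : ℚ)) * ((j:ℚ)+1)
            = ((n.choose (j+1) * (j+1) : ℕ) : ℚ) := by push_cast; ring
          _ = ((n.choose j * (n - j) : ℕ) : ℚ) := by rw [this]
          _ = (n.choose j : ℚ) * ((n:ℚ) - j) := by push_cast [hsub]; ring
    have E3 : ((-1:ℚ))^(j+1) * (n.choose (j+1)) * ((j:ℚ)+1)
        = (-1:ℚ)^j * (n.choose j) * (((j:ℚ)+1) - (((n:ℚ))+1)) := by
      rw [pow_succ]
      linear_combination (-1:ℚ)^j * (-1) * hc
    have hs := harm_succ_fact j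
    rw [Nat.factorial_succ]
    push_cast
    linear_combination ((n:ℚ)+1) * hs + (j.factorial:ℚ) * E3
      + (((j:ℚ)+1) - ((n:ℚ)+1)) * E1 + ((n:ℚ)+1)^2 * E2

lemma Icc_range (n : ℕ) (f : ℕ → ℝ) : ∑ k ∈ Icc 1 n, f k = ∑ i ∈ range n, f (i+1) := by
  induction n with
  | zero => simp
  | succ n ih => rw [Finset.sum_Icc_succ_top (by omega), ih, Finset.sum_range_succ]

lemma binom_id (m : ℕ) (x : ℝ) :
    ∑ k ∈ Icc 1 m, ((m.choose k):ℝ) * (-x)^k = (1-x)^m - 1 := by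
  have h := add_pow (-x) 1 m
  rw [Finset.sum_range_succ'] at h
  simp only [pow_zero, one_mul, Nat.choose_zero_right, Nat.cast_one, mul_one, one_pow] at h
  rw [Icc_range]
  have : (1 - x)^m = (-x + 1)^m := by ring
  rw [this, h, add_sub_cancel_right]
  apply Finset.sum_congr rfl
  intro i _
  ring

lemma key_id' (n : ℕ) (x : ℝ) :
    ∑ i ∈ range n, (-1:ℝ)^(i+1) * (n.choose (i+1)) * x^(i+1)/((i:ℝ)+1)
      = ∑ i ∈ range n, ((1-x)^(i+1) - 1)/((i:ℝ)+1) := by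
  induction n with
  | zero => simp
  | succ n ih =>
    have split : ∑ i ∈ range (n+1), (-1:ℝ)^(i+1) * ((n+1).choose (i+1)) * x^(i+1)/((i:ℝ)+1)
        = (∑ i ∈ range (n+1), (-1:ℝ)^(i+1) * (n.choose (i+1)) * x^(i+1)/((i:ℝ)+1))
          + (∑ i ∈ range (n+1), (-1:ℝ)^(i+1) * (n.choose i) * x^(i+1)/((i:ℝ)+1)) := by
      rw [← Finset.sum_add_distrib]
      apply Finset.sum_congr rfl
      intro i _
      have : (((n+1).choose (i+1) : ℝ)) = (n.choose i : ℝ) + (n.choose (i+1):ℝ) := by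
        exact_mod_cast congrArg (Nat.cast : ℕ → ℝ) (Nat.choose_succ_succ n i)
      rw [this]; ring
    have first : ∑ i ∈ range (n+1), (-1:ℝ)^(i+1) * (n.choose (i+1)) * x^(i+1)/((i:ℝ)+1)
        = ∑ i ∈ range n, (-1:ℝ)^(i+1) * (n.choose (i+1)) * x^(i+1)/((i:ℝ)+1) := by
      rw [Finset.sum_range_succ]
      simp [Nat.choose_succ_self]
    have hb : ∑ i ∈ range (n+1), (((n+1).choose (i+1)):ℝ) * (-x)^(i+1) = (1-x)^(n+1) - 1 := by
      rw [← Icc_range (n+1) (fun k => (((n+1).choose k):ℝ) * (-x)^k)]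
      exact binom_id (n+1) x
    have sec : ∑ i ∈ range (n+1), (-1:ℝ)^(i+1) * (n.choose i) * x^(i+1)/((i:ℝ)+1)
        = ((1-x)^(n+1) - 1)/((n:ℝ)+1) := by
      calc ∑ i ∈ range (n+1), (-1:ℝ)^(i+1) * (n.choose i) * x^(i+1)/((i:ℝ)+1)
          = ∑ i ∈ range (n+1), (((n+1).choose (i+1)):ℝ) * (-x)^(i+1) / ((n:ℝ)+1) := by
            apply Finset.sum_congr rfl
            intro i _
            have hc : ((n:ℝ)+1) * (n.choose i : ℝ) = ((n+1).choose (i+1) : ℝ) * ((i:ℝ)+1) := by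
              exact_mod_cast congrArg (Nat.cast : ℕ → ℝ) (Nat.add_one_mul_choose_eq n i)
            have hi : ((i:ℝ)+1) ≠ 0 := by positivity
            have hn : ((n:ℝ)+1) ≠ 0 := by positivity
            rw [div_eq_div_iff hi hn, neg_pow]
            linear_combination ((-1:ℝ))^(i+1) * x^(i+1) * hc
        _ = (∑ i ∈ range (n+1), (((n+1).choose (i+1)):ℝ) * (-x)^(i+1)) / ((n:ℝ)+1) := by
            rw [Finset.sum_div]
        _ = ((1-x)^(n+1) - 1)/((n:ℝ)+1) := by rw [hb]
    rw [split, first, ih, sec, Finset.sum_range_succ]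

lemma key_id (n : ℕ) (x : ℝ) :
    ∑ k ∈ Icc 1 n, (-1:ℝ)^k * (n.choose k) * x^k/(k:ℝ)
      = ∑ j ∈ Icc 1 n, ((1-x)^j - 1)/(j:ℝ) := by
  rw [Icc_range n (fun k => (-1:ℝ)^k * (n.choose k) * x^k/(k:ℝ)),
      Icc_range n (fun j => ((1-x)^j - 1)/(j:ℝ))]
  have h := key_id' n x
  calc ∑ i ∈ range n, (-1:ℝ)^(i+1) * (n.choose (i+1)) * x^(i+1)/(((i+1:ℕ)):ℝ)
      = ∑ i ∈ range n, (-1:ℝ)^(i+1) * (n.choose (i+1)) * x^(i+1)/((i:ℝ)+1) := by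
        apply Finset.sum_congr rfl; intro i _; push_cast; ring
    _ = ∑ i ∈ range n, ((1-x)^(i+1) - 1)/((i:ℝ)+1) := h
    _ = ∑ i ∈ range n, ((1-x)^(i+1) - 1)/(((i+1:ℕ)):ℝ) := by
        apply Finset.sum_congr rfl; intro i _; push_cast; ring


noncomputable def phi : ℝ := (1 + Real.sqrt 5)/2
noncomputable def psi : ℝ := (1 - Real.sqrt 5)/2

lemma sq5 : (Real.sqrt 5)^2 = 5 := Real.sq_sqrt (by norm_num)

lemma phi_sq : phi^2 = phi + 1 := by
  unfold phi; linear_combination (1/4 : ℝ) * sq5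

lemma psi_sq : psi^2 = psi + 1 := by
  unfold psi; linear_combination (1/4 : ℝ) * sq5

lemma psi_eq : psi = 1 - phi := by unfold phi psi; ring

lemma lucas_real : ∀ k : ℕ, phi^k + psi^k = (lucasNum k : ℝ)
  | 0 => by norm_num [lucasNum]
  | 1 => by
    unfold phi psi
    rw [pow_one, pow_one]
    norm_num [lucasNum]
  | (n+2) => by
    have h1 := lucas_real (n+1)
    have h2 := lucas_real n
    show phi^(n+2) + psi^(n+2) = ((lucasNum (n+1) + lucasNum n : ℤ) : ℝ)
    push_cast
    rw [← h1, ← h2]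
    have e1 : phi^(n+2) = phi^n * phi^2 := by ring
    have e2 : psi^(n+2) = psi^n * psi^2 := by ring
    rw [e1, e2, phi_sq, psi_sq]
    ring

lemma lucas_id (n : ℕ) :
    ∑ k ∈ Icc 1 n, (-1:ℚ)^k * (n.choose k) * (lucasNum k : ℚ) / (k:ℚ)
      = ∑ j ∈ Icc 1 n, ((lucasNum j : ℚ) - 2)/(j:ℚ) := by
  have hinj : Function.Injective ((↑) : ℚ → ℝ) := Rat.cast_injective
  apply hinj
  push_cast
  have h1 := key_id n phi
  have h2 := key_id n psi
  calc ∑ k ∈ Icc 1 n, (-1:ℝ)^k * (n.choose k) * (lucasNum k : ℝ) / (k:ℝ)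
      = ∑ k ∈ Icc 1 n, ((-1:ℝ)^k * (n.choose k) * phi^k/(k:ℝ)
          + (-1:ℝ)^k * (n.choose k) * psi^k/(k:ℝ)) := by
        apply Finset.sum_congr rfl; intro k _
        rw [← lucas_real k]; ring
    _ = (∑ k ∈ Icc 1 n, (-1:ℝ)^k * (n.choose k) * phi^k/(k:ℝ))
          + ∑ k ∈ Icc 1 n, (-1:ℝ)^k * (n.choose k) * psi^k/(k:ℝ) := Finset.sum_add_distrib
    _ = (∑ j ∈ Icc 1 n, ((1-phi)^j - 1)/(j:ℝ)) + ∑ j ∈ Icc 1 n, ((1-psi)^j - 1)/(j:ℝ) := by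
        rw [h1, h2]
    _ = ∑ j ∈ Icc 1 n, (((1-phi)^j - 1)/(j:ℝ) + ((1-psi)^j - 1)/(j:ℝ)) :=
        Finset.sum_add_distrib.symm
    _ = ∑ j ∈ Icc 1 n, ((lucasNum j : ℝ) - 2)/(j:ℝ) := by
        apply Finset.sum_congr rfl; intro j _
        have hpsi : (1:ℝ) - phi = psi := by rw [psi_eq]
        have hphi : (1:ℝ) - psi = phi := by rw [psi_eq]; ring
        rw [hpsi, hphi, ← lucas_real j]
        ring

lemma six_sum_sq : ∀ n : ℕ, 6 * ∑ k ∈ range (n+1), k^2 = n*(n+1)*(2*n+1) := by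
  intro n
  induction n with
  | zero => simp
  | succ n ih =>
    rw [Finset.sum_range_succ, Nat.mul_add, ih]
    ring

lemma cast_ne_zero_of_prime_gt (p q : ℕ) (hp : p.Prime) (hp3 : 3 < p)
    (hq6 : q ∣ 6) : (q : ZMod p) ≠ 0 := by
  haveI : Fact p.Prime := ⟨hp⟩
  intro h
  rw [ZMod.natCast_eq_zero_iff] at h
  have h' : p ∣ 6 := h.trans hq6
  have h2 : p ≤ 6 := Nat.le_of_dvd (by norm_num) h'
  interval_cases p <;> revert hp h' <;> decide

lemma sum_sq_zmod (p : ℕ) (hp : p.Prime) (hp3 : 3 < p) :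
    ∑ k ∈ range p, ((k:ZMod p))^2 = 0 := by
  haveI : Fact p.Prime := ⟨hp⟩
  have h6 : ((6:ℕ) : ZMod p) ≠ 0 := cast_ne_zero_of_prime_gt p 6 hp hp3 dvd_rfl
  have key : ((6:ℕ) : ZMod p) * ∑ k ∈ range p, ((k:ZMod p))^2 = 0 := by
    have hcast : ((6 * ∑ k ∈ range p, k^2 : ℕ) : ZMod p)
        = ((6:ℕ):ZMod p) * ∑ k ∈ range p, ((k:ZMod p))^2 := by
      push_cast
      ring
    rw [← hcast]
    obtain ⟨n, rfl⟩ : ∃ n, p = n+1 := ⟨p-1, by omega⟩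
    rw [six_sum_sq n]
    have : (n+1) ∣ n*(n+1)*(2*n+1) := ⟨n*(2*n+1), by ring⟩
    rw [ZMod.natCast_eq_zero_iff]
    exact this
  exact (mul_eq_zero.mp key).resolve_left h6

lemma sum_sq_Icc_zmod (p : ℕ) (hp : p.Prime) (hp3 : 3 < p) :
    ∑ k ∈ Icc 1 (p-1), ((k:ZMod p))^2 = 0 := by
  have h1 : Ico 1 p = Icc 1 (p-1) := by
    rw [← Finset.Ico_add_one_right_eq_Icc]; congr 1; omega
  have := sum_sq_zmod p hp hp3
  rw [Finset.range_eq_Ico, Finset.sum_eq_sum_Ico_succ_bot (by omega : 0 < p), h1] at this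
  simpa using this

lemma cast_ne_zero_Icc (p k : ℕ) (hp : p.Prime) (hk : k ∈ Icc 1 (p-1)) :
    ((k : ZMod p)) ≠ 0 := by
  haveI : Fact p.Prime := ⟨hp⟩
  simp only [mem_Icc] at hk
  intro h
  rw [ZMod.natCast_eq_zero_iff] at h
  have := Nat.le_of_dvd (by omega) h
  have hp2 := hp.two_le
  omega

lemma inv_sq_sum (p : ℕ) (hp : p.Prime) (hp3 : 3 < p) :
    ∑ k ∈ Icc 1 (p-1), (((k:ZMod p))⁻¹)^2 = 0 := by
  haveI : Fact p.Prime := ⟨hp⟩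
  have hp2 := hp.two_le
  rw [← sum_sq_Icc_zmod p hp hp3]
  refine Finset.sum_nbij' (fun k => (((k:ZMod p))⁻¹).val)
    (fun k => (((k:ZMod p))⁻¹).val) ?_ ?_ ?_ ?_ ?_
  · intro k hk
    have h0 : ((k:ZMod p))⁻¹ ≠ 0 := inv_ne_zero (cast_ne_zero_Icc p k hp hk)
    have hv : (((k:ZMod p))⁻¹).val < p := ZMod.val_lt _
    have hv0 : (((k:ZMod p))⁻¹).val ≠ 0 := by
      rw [ne_eq, ZMod.val_eq_zero]; exact h0
    simp only [mem_Icc]; omega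
  · intro k hk
    have h0 : ((k:ZMod p))⁻¹ ≠ 0 := inv_ne_zero (cast_ne_zero_Icc p k hp hk)
    have hv : (((k:ZMod p))⁻¹).val < p := ZMod.val_lt _
    have hv0 : (((k:ZMod p))⁻¹).val ≠ 0 := by
      rw [ne_eq, ZMod.val_eq_zero]; exact h0
    simp only [mem_Icc]; omega
  · intro k hk
    simp only [mem_Icc] at hk
    show (((((((k:ZMod p))⁻¹).val : ℕ) : ZMod p))⁻¹).val = k
    rw [ZMod.natCast_rightInverse ((k:ZMod p))⁻¹, inv_inv, ZMod.val_cast_of_lt (by omega)]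
  · intro k hk
    simp only [mem_Icc] at hk
    show (((((((k:ZMod p))⁻¹).val : ℕ) : ZMod p))⁻¹).val = k
    rw [ZMod.natCast_rightInverse ((k:ZMod p))⁻¹, inv_inv, ZMod.val_cast_of_lt (by omega)]
  · intro k hk
    show (((k:ZMod p))⁻¹)^2 = ((((((k:ZMod p))⁻¹).val : ℕ) : ZMod p))^2
    rw [ZMod.natCast_rightInverse ((k:ZMod p))⁻¹]

lemma half_inv_sq (p m : ℕ) (hp : p.Prime) (hp3 : 3 < p) (hm : p = 2*m+1) :
    ∑ k ∈ Icc 1 m, (((k:ZMod p))⁻¹)^2 = 0 := by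
  haveI : Fact p.Prime := ⟨hp⟩
  have h2 : ((2:ℕ):ZMod p) ≠ 0 :=
    cast_ne_zero_of_prime_gt p 2 hp hp3 (by norm_num)
  have full := inv_sq_sum p hp hp3
  have e1 : Icc 1 m = Ico 1 (m+1) := by rw [Finset.Ico_add_one_right_eq_Icc]
  have e2 : Icc (m+1) (p-1) = Ico (m+1) p := by
    rw [← Finset.Ico_add_one_right_eq_Icc]; congr 1; omega
  have e3 : Icc 1 (p-1) = Ico 1 p := by
    rw [← Finset.Ico_add_one_right_eq_Icc]; congr 1; omega
  have hsplit : ∑ k ∈ Ico 1 (m+1), (((k:ZMod p))⁻¹)^2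
      + ∑ k ∈ Ico (m+1) p, (((k:ZMod p))⁻¹)^2
      = ∑ k ∈ Ico 1 p, (((k:ZMod p))⁻¹)^2 :=
    Finset.sum_Ico_consecutive _ (by omega) (by omega)
  have hrefl : ∑ k ∈ Ico (m+1) p, (((k:ZMod p))⁻¹)^2
      = ∑ k ∈ Ico 1 (m+1), (((k:ZMod p))⁻¹)^2 := by
    refine Finset.sum_nbij' (fun k => p - k) (fun k => p - k) ?_ ?_ ?_ ?_ ?_
    · intro k hk; simp only [mem_Ico] at *; omega
    · intro k hk; simp only [mem_Ico] at *; omega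
    · intro k hk; simp only [mem_Ico] at hk; show p - (p - k) = k; omega
    · intro k hk; simp only [mem_Ico] at hk; show p - (p - k) = k; omega
    · intro k hk
      simp only [mem_Ico] at hk
      show (((k:ZMod p))⁻¹)^2 = ((((p - k : ℕ):ZMod p))⁻¹)^2
      have : (((p - k : ℕ)):ZMod p) = -((k:ℕ):ZMod p) := by
        rw [Nat.cast_sub (by omega)]
        simp
      rw [this, inv_neg, neg_pow]
      norm_num
  rw [e3] at full
  rw [hrefl] at hsplit
  rw [← hsplit] at full
  rw [e1]
  have h22 : ((2:ℕ):ZMod p) * ∑ k ∈ Ico 1 (m+1), (((k:ZMod p))⁻¹)^2 = 0 := by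
    push_cast
    rw [two_mul]
    exact full
  exact (mul_eq_zero.mp h22).resolve_left h2

lemma prod_dvd_fact (a b n : ℕ) (h0 : 0 < a) (hab : a < b) (hbn : b ≤ n) :
    a * b ∣ n.factorial := by
  have h1 : a ∣ (b-1).factorial := Nat.dvd_factorial h0 (by omega)
  have h2 : a * b ∣ (b-1).factorial * b := mul_dvd_mul h1 dvd_rfl
  have h3 : (b-1).factorial * b = b.factorial := by
    have hb : b = b - 1 + 1 := by omega
    conv_rhs => rw [hb]
    rw [Nat.factorial_succ, ← hb]
    ring
  rw [h3] at h2
  exact h2.trans (Nat.factorial_dvd_factorial hbn)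

lemma wolstenholme (p : ℕ) (hp : p.Prime) (hp3 : 3 < p) :
    ∃ w : ℤ, (harmonic (p-1) : ℚ) * ((p-1).factorial : ℚ) = (p:ℚ)^2 * w := by
  haveI : Fact p.Prime := ⟨hp⟩
  obtain ⟨m, hm⟩ : ∃ m, p = 2*m+1 := by
    obtain ⟨m, hm⟩ := hp.odd_of_ne_two (by omega)
    exact ⟨m, hm⟩
  have hm1 : 1 ≤ m := by omega
  set t : ℕ → ℕ := fun k => (p-1).factorial / (k * (p-k)) with ht
  have hdvd : ∀ k ∈ Ico 1 (m+1), k * (p-k) ∣ (p-1).factorial := by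
    intro k hk
    simp only [mem_Ico] at hk
    exact prod_dvd_fact k (p-k) (p-1) (by omega) (by omega) (by omega)
  have htk : ∀ k ∈ Ico 1 (m+1), t k * (k * (p-k)) = (p-1).factorial := by
    intro k hk
    exact Nat.div_mul_cancel (hdvd k hk)
  -- harmonic as a paired sum
  have e3 : Icc 1 (p-1) = Ico 1 p := by rw [← Finset.Ico_add_one_right_eq_Icc]; congr 1; omega
  have hsplit : ∑ k ∈ Ico 1 (m+1), ((k:ℚ))⁻¹ + ∑ k ∈ Ico (m+1) p, ((k:ℚ))⁻¹
      = ∑ k ∈ Ico 1 p, ((k:ℚ))⁻¹ :=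
    Finset.sum_Ico_consecutive _ (by omega) (by omega)
  have hrefl : ∑ k ∈ Ico (m+1) p, ((k:ℚ))⁻¹
      = ∑ k ∈ Ico 1 (m+1), (((p-k : ℕ):ℚ))⁻¹ := by
    refine Finset.sum_nbij' (fun k => p - k) (fun k => p - k) ?_ ?_ ?_ ?_ ?_
    · intro k hk; simp only [mem_Ico] at *; omega
    · intro k hk; simp only [mem_Ico] at *; omega
    · intro k hk; simp only [mem_Ico] at hk; show p - (p - k) = k; omega
    · intro k hk; simp only [mem_Ico] at hk; show p - (p - k) = k; omega
    · intro k hk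
      simp only [mem_Ico] at hk
      show ((k:ℚ))⁻¹ = (((p - (p - k) : ℕ):ℚ))⁻¹
      congr 2
      omega
  have hH : (harmonic (p-1) : ℚ) = ∑ k ∈ Ico 1 (m+1), (((k:ℚ))⁻¹ + (((p-k : ℕ):ℚ))⁻¹) := by
    rw [harm_Icc, e3, ← hsplit, hrefl, Finset.sum_add_distrib]
  -- key termwise identity
  have hterm : ∀ k ∈ Ico 1 (m+1),
      (((k:ℚ))⁻¹ + (((p-k : ℕ):ℚ))⁻¹) * ((p-1).factorial : ℚ) = (p:ℚ) * (t k : ℚ) := by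
    intro k hk
    have h1 := htk k hk
    simp only [mem_Ico] at hk
    have hc : (t k : ℚ) * ((k:ℚ) * ((p:ℚ) - (k:ℚ))) = ((p-1).factorial : ℚ) := by
      have := congrArg (fun x : ℕ => (x : ℚ)) h1
      push_cast at this
      rw [Nat.cast_sub (by omega : k ≤ p)] at this
      exact this
    have hk0 : ((k:ℚ)) ≠ 0 := Nat.cast_ne_zero.mpr (by omega)
    have hpk0 : ((p:ℚ)) - (k:ℚ) ≠ 0 := by
      have : (k:ℚ) < (p:ℚ) := by exact_mod_cast (by omega : k < p)
      linarith
    have hcast : (((p-k : ℕ):ℚ)) = (p:ℚ) - (k:ℚ) := by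
      rw [Nat.cast_sub (by omega : k ≤ p)]
    rw [hcast]
    field_simp
    linear_combination -(p:ℚ) * hc
  have hsum : (harmonic (p-1) : ℚ) * ((p-1).factorial : ℚ)
      = (p:ℚ) * ((∑ k ∈ Ico 1 (m+1), t k : ℕ) : ℚ) := by
    rw [hH, Finset.sum_mul]
    push_cast
    rw [Finset.mul_sum]
    exact Finset.sum_congr rfl hterm
  -- p divides the sum of t k
  have hzmod : ((∑ k ∈ Ico 1 (m+1), t k : ℕ) : ZMod p) = 0 := by
    push_cast
    have : ∀ k ∈ Ico 1 (m+1), ((t k : ℕ) : ZMod p)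
        = -(((p-1).factorial : ℕ) : ZMod p) * (((k:ZMod p))⁻¹)^2 := by
      intro k hk
      have h1 := htk k hk
      simp only [mem_Ico] at hk
      have hk0 : ((k:ℕ) : ZMod p) ≠ 0 := by
        intro h
        rw [ZMod.natCast_eq_zero_iff] at h
        have := Nat.le_of_dvd (by omega) h
        omega
      have htz : ((t k : ℕ) : ZMod p) * ((k:ZMod p) * (((p-k:ℕ)) : ZMod p))
          = (((p-1).factorial : ℕ) : ZMod p) := by
        have := congrArg (fun x : ℕ => (x : ZMod p)) h1
        push_cast at this
        exact this
      have hpk : (((p-k:ℕ)) : ZMod p) = -((k:ℕ) : ZMod p) := by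
        rw [Nat.cast_sub (by omega : k ≤ p)]
        simp
      rw [hpk] at htz
      have hk2 : ((t k : ℕ) : ZMod p) * ((k:ZMod p))^2
          = -(((p-1).factorial : ℕ) : ZMod p) := by linear_combination -htz
      calc ((t k : ℕ) : ZMod p)
          = ((t k : ℕ) : ZMod p) * (((k:ZMod p)) * ((k:ZMod p))⁻¹)^2 := by
            rw [mul_inv_cancel₀ hk0]; norm_num
        _ = (((t k : ℕ) : ZMod p) * ((k:ZMod p))^2) * (((k:ZMod p))⁻¹)^2 := by ring
        _ = -(((p-1).factorial : ℕ) : ZMod p) * (((k:ZMod p))⁻¹)^2 := by rw [hk2]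
    rw [Finset.sum_congr rfl this, ← Finset.mul_sum]
    have hhalf := half_inv_sq p m hp hp3 hm
    have e1 : Icc 1 m = Ico 1 (m+1) := by rw [Finset.Ico_add_one_right_eq_Icc]
    rw [e1] at hhalf
    rw [hhalf, mul_zero]
  rw [ZMod.natCast_eq_zero_iff] at hzmod
  obtain ⟨s, hs⟩ := hzmod
  refine ⟨s, ?_⟩
  rw [hsum, hs]
  push_cast
  ring

theorem stmt3 (p : ℕ) (hp : p.Prime) (hp3 : 3 < p) :
    ratCong p 1 (∑ k ∈ Finset.Icc 1 (p - 1), harmonic k * (lucasNum k : ℚ) / k) 0 := by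
  haveI : Fact p.Prime := ⟨hp⟩
  set n := p - 1 with hn
  have hp0 : (p:ℚ) ≠ 0 := Nat.cast_ne_zero.mpr (by omega)
  have hnp : ((n:ℚ)) + 1 = (p:ℚ) := by
    have h : n + 1 = p := by omega
    exact_mod_cast congrArg (Nat.cast : ℕ → ℚ) h
  choose f hf using ck_cong n
  set M : ℕ → ℤ := fun k => if h : k ≤ n then f k h else 0 with hM
  have hfM : ∀ k ∈ Icc 1 n, ((-1:ℚ)^k * (n.choose k) - 1 + (p:ℚ) * harmonic k) * k.factorial
      = (p:ℚ)^2 * M k := by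
    intro k hk
    simp only [mem_Icc] at hk
    rw [hM]
    simp only
    rw [dif_pos hk.2, ← hnp]
    exact hf k hk.2
  obtain ⟨w, hw⟩ := wolstenholme p hp hp3
  have hterm : ∀ k ∈ Icc 1 n, harmonic k * (lucasNum k : ℚ) / k
      = (p:ℚ) * (M k) * (lucasNum k) / ((k:ℚ) * k.factorial)
        + (1 - (-1:ℚ)^k * (n.choose k)) * (lucasNum k) / ((p:ℚ) * k) := by
    intro k hk
    have hE := hfM k hk
    simp only [mem_Icc] at hk
    have hk0 : (k:ℚ) ≠ 0 := Nat.cast_ne_zero.mpr (by omega)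
    have hf0 : ((k.factorial:ℕ):ℚ) ≠ 0 := Nat.cast_ne_zero.mpr (Nat.factorial_ne_zero k)
    field_simp
    linear_combination (lucasNum k : ℚ) * hE
  refine ⟨(∑ k ∈ Icc 1 n, (M k : ℚ) * (lucasNum k) / ((k:ℚ) * k.factorial))
    + 2 * w / (n.factorial : ℚ), ?_, ?_⟩
  · rw [sub_zero, pow_one]
    have hf0n : ((n.factorial:ℕ):ℚ) ≠ 0 := Nat.cast_ne_zero.mpr (Nat.factorial_ne_zero n)
    rw [Finset.sum_congr rfl hterm, Finset.sum_add_distrib]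
    have h1 : ∑ k ∈ Icc 1 n, (p:ℚ) * (M k) * (lucasNum k) / ((k:ℚ) * k.factorial)
        = (p:ℚ) * ∑ k ∈ Icc 1 n, (M k : ℚ) * (lucasNum k) / ((k:ℚ) * k.factorial) := by
      rw [Finset.mul_sum]
      apply Finset.sum_congr rfl
      intro k _
      ring
    have hlid : ∑ k ∈ Icc 1 n, (-1:ℚ)^k * (n.choose k) * (lucasNum k : ℚ) / (k:ℚ)
        = ∑ j ∈ Icc 1 n, (lucasNum j : ℚ)/(j:ℚ) - 2 * harmonic n := by
      rw [lucas_id n, harm_Icc, Finset.mul_sum, ← Finset.sum_sub_distrib]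
      apply Finset.sum_congr rfl
      intro j _
      ring
    have h2 : ∑ k ∈ Icc 1 n, (1 - (-1:ℚ)^k * (n.choose k)) * (lucasNum k) / ((p:ℚ) * k)
        = (p:ℚ) * (2 * w / (n.factorial : ℚ)) := by
      have step1 : ∑ k ∈ Icc 1 n, (1 - (-1:ℚ)^k * (n.choose k)) * (lucasNum k) / ((p:ℚ) * k)
          = ((∑ k ∈ Icc 1 n, (lucasNum k : ℚ)/(k:ℚ))
            - ∑ k ∈ Icc 1 n, (-1:ℚ)^k * (n.choose k) * (lucasNum k : ℚ) / (k:ℚ)) / p := by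
        rw [← Finset.sum_sub_distrib, Finset.sum_div]
        apply Finset.sum_congr rfl
        intro k hk
        simp only [mem_Icc] at hk
        have hk0 : (k:ℚ) ≠ 0 := Nat.cast_ne_zero.mpr (by omega)
        field_simp
      rw [step1, hlid]
      have : (harmonic n : ℚ) = (p:ℚ)^2 * w / (n.factorial : ℚ) := by
        rw [eq_div_iff hf0n]
        exact hw
      rw [this]
      field_simp
      ring
    rw [h1, h2, ← mul_add]
  · -- denominator not divisible by p
    set r : ℚ := (∑ k ∈ Icc 1 n, (M k : ℚ) * (lucasNum k) / ((k:ℚ) * k.factorial))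
      + 2 * w / (n.factorial : ℚ) with hr
    have hf0n : ((n.factorial:ℕ):ℚ) ≠ 0 := Nat.cast_ne_zero.mpr (Nat.factorial_ne_zero n)
    set D : ℕ := (n.factorial)^3 with hD
    have hD0 : D ≠ 0 := pow_ne_zero _ (Nat.factorial_ne_zero n)
    have hpD : ¬ (p ∣ D) := by
      intro h
      have h1 : p ∣ n.factorial := hp.dvd_of_dvd_pow h
      rw [hp.dvd_factorial] at h1
      omega
    -- r * D is an integer
    have hQ : ∀ k ∈ Icc 1 n, (k * k.factorial) ∣ (n.factorial)^2 := by
      intro k hk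
      simp only [mem_Icc] at hk
      have h1 : k ∣ n.factorial := Nat.dvd_factorial (by omega) hk.2
      have h2 : k.factorial ∣ n.factorial := Nat.factorial_dvd_factorial hk.2
      have := mul_dvd_mul h1 h2
      rwa [sq]
    have hch2 : ∀ k : ℕ, ∃ q : ℕ, (k ∈ Icc 1 n → q * (k * k.factorial) = n.factorial^2) := by
      intro k
      by_cases hk : k ∈ Icc 1 n
      · exact ⟨n.factorial^2/(k*k.factorial), fun _ => Nat.div_mul_cancel (hQ k hk)⟩
      · exact ⟨0, fun h => absurd h hk⟩
    choose Q hQ2 using hch2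
    have hint : ∃ Mtot : ℤ, r * (D:ℚ) = Mtot := by
      refine ⟨(∑ k ∈ Icc 1 n, M k * lucasNum k * (Q k : ℤ)
        * (n.factorial : ℤ)) + 2 * w * ((n.factorial : ℤ))^2, ?_⟩
      rw [hr, add_mul, Finset.sum_mul]
      push_cast
      congr 1
      · apply Finset.sum_congr rfl
        intro k hk
        have hq := hQ2 k hk
        have hqq : ((Q k : ℕ) : ℚ) * ((k:ℚ) * k.factorial)
            = ((n.factorial : ℚ))^2 := by
          have := congrArg (fun x : ℕ => (x:ℚ)) hq
          push_cast at this
          linear_combination this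
        simp only [mem_Icc] at hk
        have hk0 : (k:ℚ) ≠ 0 := Nat.cast_ne_zero.mpr (by omega)
        have hf0 : ((k.factorial:ℕ):ℚ) ≠ 0 := Nat.cast_ne_zero.mpr (Nat.factorial_ne_zero k)
        rw [hD]
        push_cast
        field_simp
        linear_combination -(M k : ℚ) * (lucasNum k : ℚ) * hqq
      · rw [hD]
        push_cast
        field_simp
    obtain ⟨Mtot, hMtot⟩ := hint
    have hD0' : ((D:ℕ):ℚ) ≠ 0 := Nat.cast_ne_zero.mpr hD0
    have hrdiv : r = Rat.divInt Mtot (D:ℤ) := by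
      rw [Rat.divInt_eq_div]
      rw [eq_div_iff (by exact_mod_cast hD0')]
      exact_mod_cast hMtot
    intro hpden
    have hdvd : (r.den : ℤ) ∣ (D:ℤ) := by
      rw [hrdiv]
      exact Rat.den_dvd Mtot (D:ℤ)
    have : r.den ∣ D := by exact_mod_cast hdvd
    exact hpD (dvd_trans hpden this)
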